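/- arXiv:2304.07629 — 4 statements merged into one kernel-verified Lean document; each statement's English description precedes it below -/
import Mathlib

section
/- Apostol's formula: for real x > -2 (with x ≠ 1), ζ'(x) = -1/(x-1)² + 1/12 - [x(x+1)(x+2)/6]·I₃'(x) - [(3x²+6x+2)/6]·I₃(x), where I₃(s) = ∫₁^∞ P₃(t)/t^{s+3} dt and I₃'(s) = -∫₁^∞ P₃(t)·ln t / t^{s+3} dt, with P₃ the 1-periodic Bernoulli function P₃(t) = B₃(t - ⌊t⌋)/1 (equivalently (3/(2π³))·Σ_{k≥1} sin(2kπt)/k³). -/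
open Real MeasureTheory

/-- The periodized third Bernoulli function, given by its Fourier series. -/
noncomputable def P₃ (x : ℝ) : ℝ :=
  (3 / (2 * π ^ 3)) * ∑' k : ℕ, Real.sin (2 * (k + 1) * π * x) / ((k : ℝ) + 1) ^ 3

/-- `I₃ s = ∫₁^∞ P₃ t / t^(s+3) dt`. -/
noncomputable def I₃ (s : ℝ) : ℝ := ∫ t in Set.Ioi (1 : ℝ), P₃ t / t ^ (s + 3)

/-- `I₃' s = -∫₁^∞ P₃ t · ln t / t^(s+3) dt` (the derivative of `I₃`). -/
noncomputable def I₃' (s : ℝ) : ℝ := -∫ t in Set.Ioi (1 : ℝ), P₃ t * Real.log t / t ^ (s + 3)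

open Complex Set intervalIntegral in
lemma P₃_eq (t : ℝ) : P₃ t = bernoulliFun 3 (Int.fract t) := by
  have hx : Int.fract t ∈ Set.Icc (0:ℝ) 1 := ⟨Int.fract_nonneg t, (Int.fract_lt_one t).le⟩
  have H := hasSum_one_div_nat_pow_mul_sin (k := 1) one_ne_zero hx
  -- H : HasSum (fun n : ℕ => 1 / (n:ℝ)^3 * Real.sin (2 * π * n * Int.fract t)) (...)
  have hsin : ∀ n : ℕ, Real.sin (2 * π * n * Int.fract t) = Real.sin (2 * π * n * t) := by
    intro n
    have ht := Int.fract_add_floor t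
    have h2 : 2 * π * n * t = 2 * π * n * Int.fract t + ((n * ⌊t⌋ : ℤ) : ℝ) * (2 * π) := by
      push_cast
      linear_combination (2 * π * n) * ht.symm
    rw [h2, Real.sin_add_int_mul_two_pi]
  simp_rw [hsin] at H
  have h0 : (fun n : ℕ => 1 / (n:ℝ)^3 * Real.sin (2 * π * n * t)) 0 = 0 := by simp
  have H2 := (hasSum_nat_add_iff'
      (f := fun n : ℕ => 1 / (n:ℝ)^(2*1+1) * Real.sin (2 * π * n * t)) 1).mpr H
  simp only [Finset.range_one, Finset.sum_singleton, Nat.cast_zero, mul_zero, zero_mul,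
    Real.sin_zero, mul_zero, sub_zero] at H2
  norm_num at H2
  have hP : P₃ t = (3 / (2 * π ^ 3)) *
      ∑' n : ℕ, (((n:ℝ) + 1) ^ 3)⁻¹ * Real.sin (2 * π * ((n:ℝ) + 1) * t) := by
    unfold P₃
    congr 1
    apply tsum_congr
    intro k
    rw [div_eq_mul_one_div, mul_comm, one_div]
    congr 2
    ring
  rw [hP, H2.tsum_eq, bernoulliFun]
  rw [show Polynomial.eval (Int.fract t) (Polynomial.map (algebraMap ℚ ℝ) (Polynomial.bernoulli 3))
      = (Polynomial.aeval (Int.fract t)) (Polynomial.bernoulli 3) by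
    rw [Polynomial.aeval_def, Polynomial.eval_map]]
  have hπ : π ≠ 0 := Real.pi_ne_zero
  norm_num [Nat.factorial]
  field_simp
  ring

lemma bernoulli_two' : _root_.bernoulli 2 = 1/6 := by
  norm_num [bernoulli]

lemma bernoulli_three' : _root_.bernoulli 3 = 0 := by
  rw [bernoulli_eq_bernoulli'_of_ne_one (by norm_num)]
  exact bernoulli'_eq_zero_of_odd ⟨1, by norm_num⟩ (by norm_num)

lemma bernoulliFun_one_eval (x : ℝ) : bernoulliFun 1 x = x - 1/2 := by
  simp [bernoulliFun, Polynomial.bernoulli, Finset.sum_range_succ, bernoulli_one]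
  ring

lemma bernoulliFun_two_eval (x : ℝ) : bernoulliFun 2 x = x^2 - x + 1/6 := by
  simp [bernoulliFun, Polynomial.bernoulli, Finset.sum_range_succ, bernoulli_one, bernoulli_two']
  ring

lemma bernoulliFun_three_eval (x : ℝ) : bernoulliFun 3 x = x^3 - (3/2)*x^2 + (1/2)*x := by
  simp [bernoulliFun, Polynomial.bernoulli, Finset.sum_range_succ, bernoulli_one, bernoulli_two',
    bernoulli_three']
  ring

lemma abs_P₃_le (t : ℝ) : |P₃ t| ≤ 3 := by
  rw [P₃_eq, bernoulliFun_three_eval]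
  have h0 := Int.fract_nonneg t
  have h1 := (Int.fract_lt_one t).le
  set y := Int.fract t
  rw [abs_le]
  constructor <;> nlinarith [sq_nonneg y, pow_le_one₀ h0 h1 (n := 3), sq_nonneg (1 - y)]

lemma P₃_eq_periodized (t : ℝ) : P₃ t = periodizedBernoulli 3 (t : UnitAddCircle) := by
  have hco : ((t : ℝ) : UnitAddCircle) = ((Int.fract t : ℝ) : UnitAddCircle) := by
    rw [QuotientAddGroup.eq]
    refine AddSubgroup.mem_zmultiples_iff.mpr ⟨-⌊t⌋, ?_⟩
    rw [zsmul_eq_mul, mul_one, Int.fract]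
    push_cast
    ring
  rw [P₃_eq, hco, periodizedBernoulli,
    AddCircle.liftIco_coe_apply (by rw [zero_add]; exact ⟨Int.fract_nonneg t, Int.fract_lt_one t⟩)]

lemma continuous_P₃ : Continuous P₃ := by
  have : Continuous fun t : ℝ => periodizedBernoulli 3 (t : UnitAddCircle) :=
    (periodizedBernoulli.continuous (by norm_num)).comp continuous_quotient_mk'
  exact this.congr fun t => (P₃_eq_periodized t).symm

lemma continuousOn_ofReal_cpow_Ioi (c : ℂ) :
    ContinuousOn (fun t : ℝ => (t : ℂ) ^ c) (Set.Ioi 0) := by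
  rcases eq_or_ne c 0 with rfl | hc
  · simpa using continuousOn_const
  · intro x hx
    exact ((hasDerivAt_ofReal_cpow_const (ne_of_gt (Set.mem_Ioi.mp hx)) hc).continuousAt).continuousWithinAt

lemma integrableOn_log_rpow {b : ℝ} (hb : b < -1) :
    IntegrableOn (fun t : ℝ => Real.log t * t ^ b) (Set.Ioi 1) := by
  set δ : ℝ := (-1 - b) / 2 with hδ
  have hδ0 : 0 < δ := by rw [hδ]; linarith
  refine (((integrableOn_Ioi_rpow_of_lt (a := b + δ) (by rw [hδ]; linarith)
    zero_lt_one).const_mul (1/δ)).mono' ?_ ?_)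
  · refine (ContinuousOn.mul (Real.continuousOn_log.mono ?_) ?_).aestronglyMeasurable
      measurableSet_Ioi
    · intro x hx; exact ne_of_gt (lt_trans zero_lt_one hx)
    · intro x hx
      exact (Real.continuousAt_rpow_const x b (Or.inl (ne_of_gt (lt_trans zero_lt_one hx)))).continuousWithinAt
  · rw [MeasureTheory.ae_restrict_iff' measurableSet_Ioi]
    filter_upwards with t ht
    have ht1 : (1:ℝ) < t := ht
    have ht0 : (0:ℝ) < t := lt_trans zero_lt_one ht1
    have hlog : 0 ≤ Real.log t := Real.log_nonneg ht1.le
    rw [Real.norm_eq_abs, abs_mul, abs_of_nonneg hlog,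
      abs_of_nonneg (Real.rpow_nonneg ht0.le b)]
    have h1 : Real.log t ≤ t ^ δ / δ := Real.log_le_rpow_div ht0.le hδ0
    calc Real.log t * t ^ b ≤ (t ^ δ / δ) * t ^ b := by
          exact mul_le_mul_of_nonneg_right h1 (Real.rpow_nonneg ht0.le b)
      _ = 1/δ * t ^ (b + δ) := by
          rw [Real.rpow_add ht0]; ring

lemma integrableOn_P₃_cpow {c : ℂ} (hc : c.re < -1) :
    IntegrableOn (fun t : ℝ => (P₃ t : ℂ) * (t : ℂ) ^ c) (Set.Ioi 1) := by
  refine ((integrableOn_Ioi_rpow_of_lt hc zero_lt_one).const_mul 3).mono' ?_ ?_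
  · refine (ContinuousOn.mul ?_ ((continuousOn_ofReal_cpow_Ioi c).mono ?_)).aestronglyMeasurable
      measurableSet_Ioi
    · exact (Complex.continuous_ofReal.comp continuous_P₃).continuousOn
    · exact fun x hx => Set.mem_Ioi.mpr (lt_trans zero_lt_one (Set.mem_Ioi.mp hx))
  · rw [MeasureTheory.ae_restrict_iff' measurableSet_Ioi]
    filter_upwards with t ht
    have ht0 : (0:ℝ) < t := lt_trans zero_lt_one ht
    rw [norm_mul, Complex.norm_real, Real.norm_eq_abs,
      Complex.norm_cpow_eq_rpow_re_of_pos ht0]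
    exact mul_le_mul (abs_P₃_le t) le_rfl (Real.rpow_nonneg ht0.le _) (by norm_num)

lemma integrableOn_P₃_log_cpow {c : ℂ} (hc : c.re < -1) :
    IntegrableOn (fun t : ℝ => (P₃ t : ℂ) * Real.log t * (t : ℂ) ^ c) (Set.Ioi 1) := by
  refine ((integrableOn_log_rpow hc).const_mul 3).mono' ?_ ?_
  · refine (ContinuousOn.mul (ContinuousOn.mul ?_ ?_)
        ((continuousOn_ofReal_cpow_Ioi c).mono (fun x (hx : x ∈ Set.Ioi (1:ℝ)) => Set.mem_Ioi.mpr (lt_trans zero_lt_one (Set.mem_Ioi.mp hx))))).aestronglyMeasurable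
      measurableSet_Ioi
    · exact (Complex.continuous_ofReal.comp continuous_P₃).continuousOn
    · exact Complex.continuous_ofReal.comp_continuousOn
        (Real.continuousOn_log.mono (fun x hx => ne_of_gt (lt_trans zero_lt_one hx)))
  · rw [MeasureTheory.ae_restrict_iff' measurableSet_Ioi]
    filter_upwards with t ht
    have ht1 : (1:ℝ) < t := ht
    have ht0 : (0:ℝ) < t := lt_trans zero_lt_one ht1
    have hlog : 0 ≤ Real.log t := Real.log_nonneg ht1.le
    rw [norm_mul, norm_mul, Complex.norm_real, Real.norm_eq_abs, Complex.norm_real,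
      Real.norm_eq_abs, Complex.norm_cpow_eq_rpow_re_of_pos ht0,
      abs_of_nonneg hlog]
    have := mul_le_mul_of_nonneg_right (mul_le_mul_of_nonneg_right (abs_P₃_le t) hlog)
      (Real.rpow_nonneg ht0.le c.re)
    calc |P₃ t| * Real.log t * t ^ c.re ≤ 3 * Real.log t * t ^ c.re := this
      _ = 3 * (Real.log t * t ^ c.re) := by ring

noncomputable def J (s : ℂ) : ℂ := ∫ t in Set.Ioi (1:ℝ), (P₃ t : ℂ) * (t : ℂ) ^ (-s - 3)

noncomputable def Jd (s : ℂ) : ℂ :=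
  -∫ t in Set.Ioi (1:ℝ), (P₃ t : ℂ) * Real.log t * (t : ℂ) ^ (-s - 3)

lemma aesm_P₃_cpow (c : ℂ) :
    AEStronglyMeasurable (fun t : ℝ => (P₃ t : ℂ) * (t : ℂ) ^ c)
      (volume.restrict (Set.Ioi 1)) := by
  refine (ContinuousOn.mul ?_ ((continuousOn_ofReal_cpow_Ioi c).mono
      (fun x (hx : x ∈ Set.Ioi (1:ℝ)) => Set.mem_Ioi.mpr (lt_trans zero_lt_one (Set.mem_Ioi.mp hx))))).aestronglyMeasurable measurableSet_Ioi
  exact (Complex.continuous_ofReal.comp continuous_P₃).continuousOn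

lemma aesm_P₃_log_cpow (c : ℂ) :
    AEStronglyMeasurable (fun t : ℝ => (P₃ t : ℂ) * Real.log t * (t : ℂ) ^ c)
      (volume.restrict (Set.Ioi 1)) := by
  refine (ContinuousOn.mul (ContinuousOn.mul ?_ ?_) ((continuousOn_ofReal_cpow_Ioi c).mono
      (fun x (hx : x ∈ Set.Ioi (1:ℝ)) => Set.mem_Ioi.mpr (lt_trans zero_lt_one (Set.mem_Ioi.mp hx))))).aestronglyMeasurable measurableSet_Ioi
  · exact (Complex.continuous_ofReal.comp continuous_P₃).continuousOn
  · exact Complex.continuous_ofReal.comp_continuousOn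
      (Real.continuousOn_log.mono (fun x hx => ne_of_gt (lt_trans zero_lt_one hx)))

lemma hasDerivAt_J {s₀ : ℂ} (h : -2 < s₀.re) : HasDerivAt J (Jd s₀) s₀ := by
  set ε : ℝ := (s₀.re + 2) / 2 with hε
  have hε0 : 0 < ε := by rw [hε]; linarith
  set a : ℝ := s₀.re - ε with ha
  have ha2 : -2 < a := by rw [ha, hε]; linarith
  have key := hasDerivAt_integral_of_dominated_loc_of_deriv_le (μ := volume.restrict (Set.Ioi 1))
    (F := fun s t => (P₃ t : ℂ) * (t : ℂ) ^ (-s - 3))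
    (F' := fun s t => -((P₃ t : ℂ) * Real.log t * (t : ℂ) ^ (-s - 3)))
    (x₀ := s₀) (bound := fun t => 3 * (Real.log t * t ^ (-a - 3))) (Metric.ball_mem_nhds s₀ hε0)
    (Filter.Eventually.of_forall fun s => aesm_P₃_cpow _)
    (integrableOn_P₃_cpow (by simp only [Complex.sub_re, Complex.neg_re]; norm_num; linarith))
    ((aesm_P₃_log_cpow _).neg)
    ?_ ((integrableOn_log_rpow (by linarith : -a - 3 < -1)).const_mul 3) ?_
  · have : (fun s => ∫ t in Set.Ioi (1:ℝ), (P₃ t : ℂ) * (t : ℂ) ^ (-s - 3)) = J := rfl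
    rw [this] at key
    have h2 := key.2
    rwa [MeasureTheory.integral_neg, show
      (-∫ t in Set.Ioi (1:ℝ), (P₃ t : ℂ) * Real.log t * (t : ℂ) ^ (-s₀ - 3)) = Jd s₀ from rfl]
      at h2
  · rw [MeasureTheory.ae_restrict_iff' measurableSet_Ioi]
    filter_upwards with t ht
    intro s hs
    have ht1 : (1:ℝ) < t := ht
    have ht0 : (0:ℝ) < t := lt_trans zero_lt_one ht1
    have hre : -s.re - 3 ≤ -a - 3 := by
      have := abs_le.mp ((Complex.abs_re_le_norm (s - s₀)).trans (le_of_lt (mem_ball_iff_norm.mp hs)))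
      simp only [Complex.sub_re] at this
      linarith [this.1]
    rw [norm_neg, norm_mul, norm_mul, Complex.norm_real, Real.norm_eq_abs, Complex.norm_real,
      Real.norm_eq_abs, Complex.norm_cpow_eq_rpow_re_of_pos ht0,
      abs_of_nonneg (Real.log_nonneg ht1.le)]
    have hmono : t ^ (-s - 3).re ≤ t ^ (-a - 3) := by
      apply Real.rpow_le_rpow_of_exponent_le ht1.le
      simpa using hre
    calc |P₃ t| * Real.log t * t ^ (-s - 3).re
        ≤ 3 * Real.log t * t ^ (-a - 3) := by
          apply mul_le_mul (mul_le_mul (abs_P₃_le t) le_rfl (Real.log_nonneg ht1.le) (by norm_num))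
            hmono (Real.rpow_nonneg ht0.le _)
          have := Real.log_nonneg ht1.le
          positivity
      _ = 3 * (Real.log t * t ^ (-a - 3)) := by ring
  · rw [MeasureTheory.ae_restrict_iff' measurableSet_Ioi]
    filter_upwards with t ht
    intro s hs
    have ht1 : (1:ℝ) < t := ht
    have ht0 : (0:ℝ) < t := lt_trans zero_lt_one ht1
    have hd : HasDerivAt (fun s : ℂ => (t : ℂ) ^ (-s - 3))
        ((t : ℂ) ^ (-s - 3) * Complex.log t * (-1)) s := by
      have h1 : HasDerivAt (fun s : ℂ => -s - 3) (-1) s := (hasDerivAt_neg s).sub_const 3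
      exact HasDerivAt.const_cpow h1 (Or.inl (by exact_mod_cast ne_of_gt ht0))
    have := hd.const_mul ((P₃ t : ℂ))
    refine this.congr_deriv ?_
    rw [← Complex.ofReal_log ht0.le]
    ring

open intervalIntegral in
lemma IBP_gen {N : ℝ} (hN : 1 ≤ N) {k : ℕ} (hk : k ≠ 0) {r : ℂ} (hr : r ≠ -1) :
    (r+1) * ∫ t in N..(N+1), ((bernoulliFun k (t - N) : ℝ) : ℂ) * (t : ℂ) ^ r
      = (((bernoulliFun k 1 : ℝ) : ℂ) * ((N+1 : ℝ) : ℂ) ^ (r+1)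
          - ((bernoulliFun k 0 : ℝ) : ℂ) * ((N : ℝ) : ℂ) ^ (r+1))
        - (k : ℂ) * ∫ t in N..(N+1), ((bernoulliFun (k-1) (t - N) : ℝ) : ℂ) * (t : ℂ) ^ (r+1) := by
  have hr0 : r + 1 ≠ 0 := fun h => hr (by linear_combination h)
  have hsub : Set.uIcc N (N+1) ⊆ Set.Ioi (0:ℝ) := by
    rw [Set.uIcc_of_le (by linarith)]
    intro x hx
    exact lt_of_lt_of_le (by linarith : (0:ℝ) < N) hx.1
  have hu : ∀ x ∈ Set.uIcc N (N+1),
      HasDerivAt (fun t : ℝ => ((bernoulliFun k (t - N) : ℝ) : ℂ))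
        (((k * bernoulliFun (k-1) (x - N) : ℝ) : ℂ)) x := by
    intro x _
    have h1 : HasDerivAt (fun t : ℝ => bernoulliFun k (t - N))
        (k * bernoulliFun (k-1) (x - N)) x := by
      have := (hasDerivAt_bernoulliFun k (x - N)).comp x ((hasDerivAt_id x).sub_const N)
      simpa [Function.comp_def] using this
    exact h1.ofReal_comp
  have hv : ∀ x ∈ Set.uIcc N (N+1),
      HasDerivAt (fun t : ℝ => (t : ℂ) ^ (r+1) / (r+1)) ((x : ℂ) ^ r) x := by
    intro x hx
    exact hasDerivAt_ofReal_cpow_const' (ne_of_gt (hsub hx)) hr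
  have hu' : IntervalIntegrable (fun t : ℝ => ((k * bernoulliFun (k-1) (t - N) : ℝ) : ℂ))
      volume N (N+1) := by
    apply Continuous.intervalIntegrable
    exact Complex.continuous_ofReal.comp
      ((continuous_const.mul ((continuous_bernoulliFun (k-1)).comp (continuous_id.sub continuous_const))))
  have hv' : IntervalIntegrable (fun t : ℝ => (t : ℂ) ^ r) volume N (N+1) :=
    ((continuousOn_ofReal_cpow_Ioi r).mono hsub).intervalIntegrable
  have key := integral_mul_deriv_eq_deriv_mul hu hv hu' hv'
  rw [key]
  have : (∫ t in N..(N+1), ((k * bernoulliFun (k-1) (t - N) : ℝ) : ℂ) * ((t : ℂ) ^ (r+1) / (r+1)))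
      = ((k : ℂ)/(r+1)) * ∫ t in N..(N+1), ((bernoulliFun (k-1) (t - N) : ℝ) : ℂ) * (t : ℂ) ^ (r+1) := by
    rw [← intervalIntegral.integral_const_mul]
    apply intervalIntegral.integral_congr
    intro x _
    push_cast
    field_simp
  rw [this]
  field_simp
  simp only [add_sub_cancel_left, sub_self, mul_zero]
  ring

lemma bernoulliFun_zero_eval (x : ℝ) : bernoulliFun 0 x = 1 := by
  simp [bernoulliFun, Polynomial.bernoulli]

open intervalIntegral in
lemma EM_step {s : ℂ} (hs : 1 < s.re) {N : ℝ} (hN : 1 ≤ N)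
    (hP : ∀ t ∈ Set.uIcc N (N+1), P₃ t = bernoulliFun 3 (t - N)) :
    ((N+1 : ℝ) : ℂ) ^ (-s)
      = (∫ t in N..(N+1), (t : ℂ) ^ (-s))
        + (((N+1 : ℝ) : ℂ) ^ (-s) - ((N : ℝ) : ℂ) ^ (-s)) / 2
        - s * (((N+1 : ℝ) : ℂ) ^ (-s-1) - ((N : ℝ) : ℂ) ^ (-s-1)) / 12
        - (s * (s+1) * (s+2) / 6) * ∫ t in N..(N+1), (P₃ t : ℂ) * (t : ℂ) ^ (-s-3) := by
  have hPint : (∫ t in N..(N+1), (P₃ t : ℂ) * (t : ℂ) ^ (-s-3))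
      = ∫ t in N..(N+1), ((bernoulliFun 3 (t - N) : ℝ) : ℂ) * (t : ℂ) ^ (-s-3) :=
    integral_congr fun x hx => by rw [hP x hx]
  have hren : ∀ c : ℝ, s = (c : ℂ) → s.re = c := fun c h => by rw [h, Complex.ofReal_re]
  have h3 := IBP_gen hN (k := 3) (by norm_num) (r := -s-3)
    (by intro h
        have := hren (-2) (by push_cast; linear_combination -h)
        linarith)
  rw [show (-s-3+1 : ℂ) = -s-2 by ring] at h3
  have h2 := IBP_gen hN (k := 2) (by norm_num) (r := -s-2)
    (by intro h
        have := hren (-1) (by push_cast; linear_combination -h)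
        linarith)
  rw [show (-s-2+1 : ℂ) = -s-1 by ring] at h2
  have h1 := IBP_gen hN (k := 1) (by norm_num) (r := -s-1)
    (by intro h
        have := hren 0 (by push_cast; linear_combination -h)
        linarith)
  rw [show (-s-1+1 : ℂ) = -s by ring] at h1
  have h0 : (∫ t in N..(N+1), ((bernoulliFun (1-1) (t - N) : ℝ) : ℂ) * (t : ℂ) ^ (-s))
      = ∫ t in N..(N+1), (t : ℂ) ^ (-s) :=
    integral_congr fun x _ => by rw [bernoulliFun_zero_eval]; norm_num
  rw [h0] at h1
  have e31 : bernoulliFun 3 1 = 0 := by rw [bernoulliFun_three_eval]; norm_num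
  have e30 : bernoulliFun 3 0 = 0 := by rw [bernoulliFun_three_eval]; norm_num
  have e21 : bernoulliFun 2 1 = 1/6 := by rw [bernoulliFun_two_eval]; norm_num
  have e20 : bernoulliFun 2 0 = 1/6 := by rw [bernoulliFun_two_eval]; norm_num
  have e11 : bernoulliFun 1 1 = 1/2 := by rw [bernoulliFun_one_eval]; norm_num
  have e10 : bernoulliFun 1 0 = -(1/2) := by rw [bernoulliFun_one_eval]; norm_num
  rw [e31, e30] at h3
  rw [show ((3:ℕ) - 1) = 2 by norm_num] at h3
  rw [e21, e20] at h2
  rw [show ((2:ℕ) - 1) = 1 by norm_num] at h2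
  rw [e11, e10] at h1
  rw [hPint]
  push_cast at h3 h2 h1 ⊢
  linear_combination (-(s*(s+1))/6) * h3 + (-(s/2)) * h2 + (-1) * h1

lemma P₃_on_interval (n : ℕ) :
    ∀ t ∈ Set.uIcc ((n:ℝ)+1) (((n:ℝ)+1)+1), P₃ t = bernoulliFun 3 (t - ((n:ℝ)+1)) := by
  intro t ht
  rw [Set.uIcc_of_le (by linarith)] at ht
  obtain ⟨hl, hr⟩ := ht
  rcases eq_or_lt_of_le hr with heq | hlt
  · rw [heq, P₃_eq]
    have h1 : ((n:ℝ)+1+1) = ((n+2 : ℕ) : ℝ) := by push_cast; ring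
    rw [h1, Int.fract_natCast]
    rw [bernoulliFun_three_eval, bernoulliFun_three_eval]
    push_cast
    ring
  · rw [P₃_eq]
    congr 1
    have hfloor : ⌊t⌋ = (n:ℤ) + 1 := by
      rw [Int.floor_eq_iff]
      constructor
      · push_cast; linarith
      · push_cast; linarith
    rw [Int.fract, hfloor]
    push_cast
    ring

open intervalIntegral in
lemma intInt_cpow (r : ℂ) {a b : ℝ} (ha : 1 ≤ a) (hb : 1 ≤ b) :
    IntervalIntegrable (fun t : ℝ => (t : ℂ) ^ r) volume a b := by
  apply ((continuousOn_ofReal_cpow_Ioi r).mono ?_).intervalIntegrable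
  intro x hx
  have h1 : 1 ≤ x := by
    rcases Set.mem_uIcc.mp hx with h | h
    exacts [le_trans ha h.1, le_trans hb h.1]
  exact lt_of_lt_of_le zero_lt_one h1

open intervalIntegral in
lemma intInt_P₃_cpow (r : ℂ) {a b : ℝ} (ha : 1 ≤ a) (hb : 1 ≤ b) :
    IntervalIntegrable (fun t : ℝ => (P₃ t : ℂ) * (t : ℂ) ^ r) volume a b := by
  apply ContinuousOn.intervalIntegrable
  apply ContinuousOn.mul ((Complex.continuous_ofReal.comp continuous_P₃).continuousOn)
  apply (continuousOn_ofReal_cpow_Ioi r).mono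
  intro x hx
  have h1 : 1 ≤ x := by
    rcases Set.mem_uIcc.mp hx with h | h
    exacts [le_trans ha h.1, le_trans hb h.1]
  exact lt_of_lt_of_le zero_lt_one h1

open intervalIntegral in
lemma EM_sum {s : ℂ} (hs : 1 < s.re) (n : ℕ) :
    ∑ k ∈ Finset.range (n+1), (((k:ℝ)+1 : ℝ) : ℂ) ^ (-s)
      = (∫ t in (1:ℝ)..((n:ℝ)+1), (t : ℂ) ^ (-s)) + 1/2 + (((n:ℝ)+1 : ℝ) : ℂ) ^ (-s)/2
        + s/12 - s * (((n:ℝ)+1 : ℝ) : ℂ) ^ (-s-1)/12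
        - (s*(s+1)*(s+2)/6) * ∫ t in (1:ℝ)..((n:ℝ)+1), (P₃ t : ℂ) * (t : ℂ) ^ (-s-3) := by
  induction n with
  | zero =>
    simp only [Finset.range_one, Finset.sum_singleton, Nat.cast_zero]
    norm_num [Complex.one_cpow]
    try ring
  | succ n ih =>
    have hn1 : (1:ℝ) ≤ (n:ℝ)+1 := by linarith [(Nat.cast_nonneg n : (0:ℝ) ≤ n)]
    have hn2 : (1:ℝ) ≤ (n:ℝ)+1+1 := by linarith [(Nat.cast_nonneg n : (0:ℝ) ≤ n)]
    have hsplit1 : (∫ t in (1:ℝ)..(((n:ℝ)+1)+1), (t : ℂ) ^ (-s))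
        = (∫ t in (1:ℝ)..((n:ℝ)+1), (t : ℂ) ^ (-s))
          + ∫ t in ((n:ℝ)+1)..(((n:ℝ)+1)+1), (t : ℂ) ^ (-s) :=
      (integral_add_adjacent_intervals (intInt_cpow _ le_rfl hn1) (intInt_cpow _ hn1 hn2)).symm
    have hsplit2 : (∫ t in (1:ℝ)..(((n:ℝ)+1)+1), (P₃ t : ℂ) * (t : ℂ) ^ (-s-3))
        = (∫ t in (1:ℝ)..((n:ℝ)+1), (P₃ t : ℂ) * (t : ℂ) ^ (-s-3))
          + ∫ t in ((n:ℝ)+1)..(((n:ℝ)+1)+1), (P₃ t : ℂ) * (t : ℂ) ^ (-s-3) :=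
      (integral_add_adjacent_intervals (intInt_P₃_cpow _ le_rfl hn1) (intInt_P₃_cpow _ hn1 hn2)).symm
    have hstep := EM_step hs (N := (n:ℝ)+1) hn1 (P₃_on_interval n)
    rw [Finset.sum_range_succ, ih]
    push_cast at hstep ⊢
    rw [hsplit1, hsplit2] at *
    push_cast at *
    linear_combination hstep

lemma tendsto_aux_cpow {c : ℂ} (hc : c.re < 0) :
    Filter.Tendsto (fun n : ℕ => (((n:ℝ)+1 : ℝ) : ℂ) ^ c) Filter.atTop (nhds 0) := by
  rw [tendsto_zero_iff_norm_tendsto_zero]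
  have hb : Filter.Tendsto (fun n : ℕ => (n:ℝ)+1) Filter.atTop Filter.atTop :=
    Filter.tendsto_atTop_add_const_right _ 1 tendsto_natCast_atTop_atTop
  have h1 : Filter.Tendsto (fun x : ℝ => x ^ c.re) Filter.atTop (nhds 0) := by
    have := tendsto_rpow_neg_atTop (y := -c.re) (by linarith)
    simpa using this
  refine (h1.comp hb).congr fun n => ?_
  have hpos : (0:ℝ) < (n:ℝ)+1 := by positivity
  rw [Function.comp_apply, Complex.norm_cpow_eq_rpow_re_of_pos hpos]

open intervalIntegral Filter in
lemma zeta_eq_EM {s : ℂ} (hs : 1 < s.re) :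
    riemannZeta s = (s-1)⁻¹ + 1/2 + s/12 - (s*(s+1)*(s+2)/6) * J s := by
  have hb : Tendsto (fun n : ℕ => (n:ℝ)+1) atTop atTop :=
    Filter.tendsto_atTop_add_const_right _ 1 tendsto_natCast_atTop_atTop
  -- LHS tendsto
  have hsummable : Summable (fun n : ℕ => 1 / ((n:ℂ)+1) ^ s) := by
    have h0 : Summable (fun n : ℕ => 1 / (n:ℂ) ^ s) := by
      rw [Complex.summable_one_div_nat_cpow]; exact hs
    have := (summable_nat_add_iff 1).mpr h0
    refine this.congr fun n => ?_
    push_cast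
    ring_nf
  have hL : Tendsto (fun n : ℕ => ∑ k ∈ Finset.range (n+1), (((k:ℝ)+1 : ℝ) : ℂ) ^ (-s))
      atTop (nhds (riemannZeta s)) := by
    rw [zeta_eq_tsum_one_div_nat_add_one_cpow hs]
    have h1 := hsummable.hasSum.tendsto_sum_nat
    have h2 := h1.comp (tendsto_add_atTop_nat 1)
    refine h2.congr fun n => Finset.sum_congr rfl fun k _ => ?_
    rw [Complex.cpow_neg]
    push_cast
    rw [one_div]
  -- RHS tendsto
  have hInt1 : ∀ n : ℕ, (∫ t in (1:ℝ)..((n:ℝ)+1), (t : ℂ) ^ (-s))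
      = ((((n:ℝ)+1 : ℝ) : ℂ) ^ (-s+1) - 1) / (-s+1) := by
    intro n
    have hn1 : (1:ℝ) ≤ (n:ℝ)+1 := by linarith [(Nat.cast_nonneg n : (0:ℝ) ≤ n)]
    rw [integral_cpow]
    · norm_num
    · right
      constructor
      · intro h
        have h2 : s = 1 := by linear_combination -h
        rw [h2] at hs
        simp at hs
      · rw [Set.uIcc_of_le hn1]
        intro h
        exact absurd h.1 (by norm_num)
  have hR1 : Tendsto (fun n : ℕ => (∫ t in (1:ℝ)..((n:ℝ)+1), (t : ℂ) ^ (-s)))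
      atTop (nhds ((s-1)⁻¹)) := by
    simp_rw [hInt1]
    have hcre : (-s+1 : ℂ).re < 0 := by
      simp only [Complex.add_re, Complex.neg_re, Complex.one_re]
      linarith
    have h1 : Tendsto (fun n : ℕ => ((((n:ℝ)+1 : ℝ) : ℂ) ^ (-s+1) - 1) / (-s+1))
        atTop (nhds ((0 - 1)/(-s+1))) :=
      ((tendsto_aux_cpow hcre).sub_const 1).div_const _
    have hne : s - 1 ≠ 0 := by
      intro h
      have h2 : s = 1 := by linear_combination h
      rw [h2] at hs
      simp at hs
    have heq : ((0:ℂ) - 1)/(-s+1) = (s-1)⁻¹ := by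
      rw [inv_eq_one_div]
      rw [div_eq_div_iff (fun h => hne (by linear_combination -h)) hne]
      ring
    rw [← heq]
    exact h1
  have hR2 : Tendsto (fun n : ℕ => (((n:ℝ)+1 : ℝ) : ℂ) ^ (-s)) atTop (nhds 0) :=
    tendsto_aux_cpow (by simp only [Complex.neg_re]; linarith)
  have hR3 : Tendsto (fun n : ℕ => (((n:ℝ)+1 : ℝ) : ℂ) ^ (-s-1)) atTop (nhds 0) :=
    tendsto_aux_cpow (by simp only [Complex.sub_re, Complex.neg_re, Complex.one_re]; linarith)
  have hR4 : Tendsto (fun n : ℕ => ∫ t in (1:ℝ)..((n:ℝ)+1), (P₃ t : ℂ) * (t : ℂ) ^ (-s-3))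
      atTop (nhds (J s)) := by
    exact MeasureTheory.intervalIntegral_tendsto_integral_Ioi 1
      (integrableOn_P₃_cpow (by simp only [Complex.sub_re, Complex.neg_re]; norm_num; linarith)) hb
  have hR : Tendsto (fun n : ℕ =>
      (∫ t in (1:ℝ)..((n:ℝ)+1), (t : ℂ) ^ (-s)) + 1/2 + (((n:ℝ)+1 : ℝ) : ℂ) ^ (-s)/2
        + s/12 - s * (((n:ℝ)+1 : ℝ) : ℂ) ^ (-s-1)/12
        - (s*(s+1)*(s+2)/6) * ∫ t in (1:ℝ)..((n:ℝ)+1), (P₃ t : ℂ) * (t : ℂ) ^ (-s-3))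
      atTop (nhds ((s-1)⁻¹ + 1/2 + 0/2 + s/12 - s * 0/12 - (s*(s+1)*(s+2)/6) * J s)) := by
    exact (((((hR1.add_const _).add (hR2.div_const _)).add_const _).sub
      (((hR3.const_mul s)).div_const _)).sub (hR4.const_mul _))
  have := tendsto_nhds_unique (hL.congr (fun n => EM_sum hs n)) hR
  rw [this]
  ring

lemma J_real (x : ℝ) : J (x : ℂ) = ((I₃ x : ℝ) : ℂ) := by
  unfold J I₃
  rw [show ((∫ t in Set.Ioi (1:ℝ), P₃ t / t ^ (x + 3) : ℝ) : ℂ)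
      = ∫ t in Set.Ioi (1:ℝ), ((P₃ t / t ^ (x + 3) : ℝ) : ℂ) from (integral_ofReal (𝕜 := ℂ)).symm]
  refine setIntegral_congr_fun measurableSet_Ioi fun t ht => ?_
  have ht0 : (0:ℝ) < t := lt_trans zero_lt_one ht
  have h1 : ((t : ℝ) : ℂ) ^ (-(x:ℂ) - 3) = (((t ^ (-(x+3)) : ℝ)) : ℂ) := by
    rw [Complex.ofReal_cpow ht0.le]
    push_cast
    ring_nf
  rw [h1, ← Complex.ofReal_mul]
  congr 1
  rw [Real.rpow_neg ht0.le, div_eq_mul_inv]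

lemma Jd_real (x : ℝ) : Jd (x : ℂ) = ((I₃' x : ℝ) : ℂ) := by
  unfold Jd I₃'
  rw [Complex.ofReal_neg, show ((∫ t in Set.Ioi (1:ℝ), P₃ t * Real.log t / t ^ (x + 3) : ℝ) : ℂ)
      = ∫ t in Set.Ioi (1:ℝ), ((P₃ t * Real.log t / t ^ (x + 3) : ℝ) : ℂ) from (integral_ofReal (𝕜 := ℂ)).symm]
  congr 1
  refine setIntegral_congr_fun measurableSet_Ioi fun t ht => ?_
  have ht0 : (0:ℝ) < t := lt_trans zero_lt_one ht
  have h1 : ((t : ℝ) : ℂ) ^ (-(x:ℂ) - 3) = (((t ^ (-(x+3)) : ℝ)) : ℂ) := by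
    rw [Complex.ofReal_cpow ht0.le]
    push_cast
    ring_nf
  rw [h1, ← Complex.ofReal_mul, ← Complex.ofReal_mul]
  congr 1
  rw [Real.rpow_neg ht0.le, div_eq_mul_inv]

noncomputable def G (s : ℂ) : ℂ := (s-1)⁻¹ + 1/2 + s/12 - s*(s+1)*(s+2)/6 * J s

def U : Set ℂ := {s : ℂ | -2 < s.re ∧ s ≠ 1}

lemma U_open : IsOpen U := by
  have : U = {s : ℂ | -2 < s.re} ∩ {(1:ℂ)}ᶜ := by
    ext s; simp [U, Set.mem_setOf_eq, and_comm]
  rw [this]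
  exact (isOpen_lt continuous_const Complex.continuous_re).inter isOpen_compl_singleton

lemma U_preconnected : IsPreconnected U := by
  have hW1 : IsPreconnected {s : ℂ | -2 < s.re ∧ 0 < s.im} :=
    ((convex_halfSpace_re_gt (-2)).inter (convex_halfSpace_im_gt 0)).isPreconnected
  have hW2 : IsPreconnected {s : ℂ | -2 < s.re ∧ s.re < 1} :=
    ((convex_halfSpace_re_gt (-2)).inter (convex_halfSpace_re_lt 1)).isPreconnected
  have hW3 : IsPreconnected {s : ℂ | -2 < s.re ∧ s.im < 0} :=
    ((convex_halfSpace_re_gt (-2)).inter (convex_halfSpace_im_lt 0)).isPreconnected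
  have hW4 : IsPreconnected {s : ℂ | 1 < s.re} := (convex_halfSpace_re_gt 1).isPreconnected
  have hA : IsPreconnected ({s : ℂ | -2 < s.re ∧ s.re < 1} ∪ {s : ℂ | -2 < s.re ∧ 0 < s.im}) := by
    refine IsPreconnected.union Complex.I ?_ ?_ hW2 hW1
    · simp [Complex.I_re]
    · simp [Complex.I_re, Complex.I_im]
  have hB : IsPreconnected (({s : ℂ | -2 < s.re ∧ s.re < 1} ∪ {s : ℂ | -2 < s.re ∧ 0 < s.im})
      ∪ {s : ℂ | -2 < s.re ∧ s.im < 0}) := by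
    refine IsPreconnected.union (-Complex.I) ?_ ?_ hA hW3
    · left; simp [Complex.I_re]
    · simp [Complex.I_re, Complex.I_im]
  have hC : IsPreconnected ((({s : ℂ | -2 < s.re ∧ s.re < 1} ∪ {s : ℂ | -2 < s.re ∧ 0 < s.im})
      ∪ {s : ℂ | -2 < s.re ∧ s.im < 0}) ∪ {s : ℂ | 1 < s.re}) := by
    refine IsPreconnected.union (2 + Complex.I) ?_ ?_ hB hW4
    · left; right; simp [Complex.add_re, Complex.add_im, Complex.I_re, Complex.I_im]
    · simp [Complex.add_re, Complex.I_re]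
  have hU : U = (({s : ℂ | -2 < s.re ∧ s.re < 1} ∪ {s : ℂ | -2 < s.re ∧ 0 < s.im})
      ∪ {s : ℂ | -2 < s.re ∧ s.im < 0}) ∪ {s : ℂ | 1 < s.re} := by
    ext s
    simp only [U, Set.mem_setOf_eq, Set.mem_union]
    constructor
    · rintro ⟨hre, hne⟩
      rcases lt_trichotomy s.im 0 with him | him | him
      · exact Or.inl (Or.inr ⟨hre, him⟩)
      · rcases lt_trichotomy s.re 1 with h1 | h1 | h1
        · exact Or.inl (Or.inl (Or.inl ⟨hre, h1⟩))
        · exact absurd (Complex.ext h1 him) hne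
        · exact Or.inr h1
      · exact Or.inl (Or.inl (Or.inr ⟨hre, him⟩))
    · rintro ((((⟨h1, h2⟩ | ⟨h1, h2⟩) | ⟨h1, h2⟩)) | h1)
      · exact ⟨h1, fun h => by rw [h] at h2; simp at h2⟩
      · exact ⟨h1, fun h => by rw [h] at h2; simp at h2⟩
      · exact ⟨h1, fun h => by rw [h] at h2; simp at h2⟩
      · refine ⟨by linarith, fun h => by rw [h] at h1; simp at h1⟩
  rw [hU]
  exact hC

lemma hasDerivAt_G {z : ℂ} (hz : -2 < z.re) (hz1 : z ≠ 1) :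
    HasDerivAt G (-((z-1)^2)⁻¹ + 1/12
      - ((3*z^2+6*z+2)/6 * J z + z*(z+1)*(z+2)/6 * Jd z)) z := by
  have h1 : HasDerivAt (fun s : ℂ => (s-1)⁻¹) (-((z-1)^2)⁻¹) z := by
    have := ((hasDerivAt_id z).sub_const 1).inv (sub_ne_zero.mpr hz1)
    refine this.congr_deriv ?_
    simp only [id_eq]
    field_simp
  have h3 : HasDerivAt (fun s : ℂ => s/12) (1/12) z := by
    simpa using (hasDerivAt_id z).div_const 12
  have hPoly : HasDerivAt (fun s : ℂ => s*(s+1)*(s+2)/6) ((3*z^2+6*z+2)/6) z := by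
    have := (((hasDerivAt_id z).mul ((hasDerivAt_id z).add_const 1)).mul
      ((hasDerivAt_id z).add_const 2)).div_const 6
    refine this.congr_deriv ?_
    simp only [id_eq, Pi.mul_apply]
    ring
  have h4 : HasDerivAt (fun s : ℂ => s*(s+1)*(s+2)/6 * J s)
      ((3*z^2+6*z+2)/6 * J z + z*(z+1)*(z+2)/6 * Jd z) z := by
    have := hPoly.mul (hasDerivAt_J hz)
    refine this.congr_deriv ?_
    ring
  have := (((h1.add_const (1/2)).add h3).sub h4)
  refine this.congr_of_eventuallyEq ?_ |>.congr_deriv ?_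
  · filter_upwards with s; rfl
  · ring

lemma zeta_eqOn_G : Set.EqOn riemannZeta G U := by
  have hζd : DifferentiableOn ℂ riemannZeta U :=
    fun s hs => (differentiableAt_riemannZeta hs.2).differentiableWithinAt
  have hζ : AnalyticOnNhd ℂ riemannZeta U := hζd.analyticOnNhd U_open
  have hGd : DifferentiableOn ℂ G U := by
    refine fun s hs => DifferentiableAt.differentiableWithinAt ?_
    have h1 : DifferentiableAt ℂ (fun s : ℂ => (s-1)⁻¹) s :=
      ((differentiableAt_id.sub_const 1).inv (sub_ne_zero.mpr hs.2))
    have h4 : DifferentiableAt ℂ (fun s : ℂ => s*(s+1)*(s+2)/6 * J s) s := by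
      refine DifferentiableAt.mul ?_ (hasDerivAt_J hs.1).differentiableAt
      exact ((differentiableAt_id.mul (differentiableAt_id.add_const 1)).mul
        (differentiableAt_id.add_const 2)).div_const 6
    exact ((h1.add_const (1/2)).add (differentiableAt_id.div_const 12)).sub h4
  have hG : AnalyticOnNhd ℂ G U := hGd.analyticOnNhd U_open
  have h2U : (2 : ℂ) ∈ U := by
    constructor
    · norm_num
    · norm_num
  have hfg : riemannZeta =ᶠ[nhds (2 : ℂ)] G := by
    have hopen : IsOpen {s : ℂ | 1 < s.re} := isOpen_lt continuous_const Complex.continuous_re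
    refine Filter.eventuallyEq_of_mem (hopen.mem_nhds (by norm_num)) fun s hs => ?_
    exact zeta_eq_EM hs
  exact hζ.eqOn_of_preconnected_of_eventuallyEq hG U_preconnected h2U hfg

theorem apostol_formula (x : ℝ) (hx : -2 < x) (hx1 : x ≠ 1) :
    deriv riemannZeta x
      = ((-1 / (x - 1) ^ 2 + 1 / 12 - (x * (x + 1) * (x + 2) / 6) * I₃' x
          - ((3 * x ^ 2 + 6 * x + 2) / 6) * I₃ x : ℝ) : ℂ) := by
  have hzU : (x : ℂ) ∈ U := by
    refine ⟨by simpa using hx, fun h => hx1 ?_⟩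
    exact_mod_cast h
  have hz1 : (x : ℂ) ≠ 1 := hzU.2
  have hderiv_eq : deriv riemannZeta (x : ℂ) = deriv G (x : ℂ) := by
    apply Filter.EventuallyEq.deriv_eq
    exact Filter.eventuallyEq_of_mem (U_open.mem_nhds hzU) (fun w hw => zeta_eqOn_G hw)
  have hG := hasDerivAt_G (z := (x : ℂ)) (by simpa using hx) hz1
  rw [hderiv_eq, hG.deriv, J_real, Jd_real]
  push_cast
  ring
end

section
/- With I₃(2) = ∫₁^∞ P₃(t)/t⁵ dt and P₃ the periodized third Bernoulli polynomial, one has I₃(2) = (1/(4π²))·Σ_{k=1}^∞ [k(1 - 2k²π²) + 2k⁴π³(π - 2·Si(2kπ))]/k³. -/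
open Real MeasureTheory

/-- The sine integral `Si z = ∫_0^z sin t / t dt`. -/
noncomputable def Si (z : ℝ) : ℝ := ∫ t in (0 : ℝ)..z, Real.sin t / t

open Set Filter intervalIntegral Topology

lemma integrableOn_exp_neg_mul {b : ℝ} (hb : 0 < b) (c : ℝ) :
    IntegrableOn (fun u : ℝ => Real.exp (-(b*u))) (Ioi c) := by
  have := exp_neg_integrableOn_Ioi c hb
  refine this.congr_fun (fun x _ => by ring_nf) measurableSet_Ioi

lemma integral_exp_neg_mul_Ioi {b : ℝ} (hb : 0 < b) :
    ∫ u in Ioi (0:ℝ), Real.exp (-(b*u)) = 1/b := by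
  have hderiv : ∀ x ∈ Ici (0:ℝ), HasDerivAt (fun u : ℝ => -Real.exp (-(b*u))/b)
      (Real.exp (-(b*x))) x := by
    intro x _
    have h1 : HasDerivAt (fun u : ℝ => -(b*u)) (-b) x := by
      simpa using ((hasDerivAt_id x).const_mul (-b))
    have := (h1.exp).neg.div_const b
    refine this.congr_deriv ?_
    field_simp
  have htend : Tendsto (fun u : ℝ => -Real.exp (-(b*u))/b) atTop (𝓝 0) := by
    have h2 : Tendsto (fun u : ℝ => -(b*u)) atTop atBot := by
      simpa [neg_mul] using tendsto_neg_atBot_iff.mpr (tendsto_id.const_mul_atTop hb)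
    have := (Real.tendsto_exp_atBot.comp h2).neg.div_const b
    simpa using this
  have h := integral_Ioi_of_hasDerivAt_of_tendsto' hderiv (integrableOn_exp_neg_mul hb 0) htend
  simp at h
  rw [h]; field_simp

lemma integral_sin_mul_exp (u R : ℝ) :
    ∫ t in (0:ℝ)..R, Real.sin t * Real.exp (-(u*t)) =
      (1 - Real.exp (-(u*R)) * (Real.cos R + u * Real.sin R)) / (1 + u^2) := by
  have hu : (1:ℝ) + u^2 ≠ 0 := by positivity
  have hd : ∀ t ∈ uIcc (0:ℝ) R,
      HasDerivAt (fun t : ℝ => -(Real.exp (-(u*t)) * (Real.cos t + u * Real.sin t))/(1+u^2))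
        (Real.sin t * Real.exp (-(u*t))) t := by
    intro t _
    have h1 : HasDerivAt (fun t : ℝ => -(u*t)) (-u) t := by
      simpa using ((hasDerivAt_id t).const_mul (-u))
    have he := h1.exp
    have hc : HasDerivAt (fun t : ℝ => Real.cos t + u * Real.sin t)
        (-Real.sin t + u * Real.cos t) t :=
      (Real.hasDerivAt_cos t).add ((Real.hasDerivAt_sin t).const_mul u)
    have := ((he.mul hc).neg).div_const (1+u^2)
    refine this.congr_deriv ?_
    field_simp
    ring
  have hint : IntervalIntegrable (fun t : ℝ => Real.sin t * Real.exp (-(u*t))) volume 0 R :=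
    (Real.continuous_sin.mul ((continuous_const.mul continuous_id).neg.rexp)).intervalIntegrable 0 R
  have := integral_eq_sub_of_hasDerivAt hd hint
  rw [this]
  simp [Real.cos_zero, Real.sin_zero]
  ring

set_option maxHeartbeats 1000000 in
lemma Si_eq_integral {R : ℝ} (hR : 0 < R) :
    Si R = ∫ u in Ioi (0:ℝ),
      (1 - Real.exp (-(u*R)) * (Real.cos R + u * Real.sin R)) / (1 + u^2) := by
  have hcont : Continuous (fun p : ℝ × ℝ => Real.sin p.1 * Real.exp (-(p.1*p.2))) := by
    apply (Real.continuous_sin.comp continuous_fst).mul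
    exact ((continuous_fst.mul continuous_snd).neg).rexp
  have hInt : Integrable (fun p : ℝ × ℝ => Real.sin p.1 * Real.exp (-(p.1*p.2)))
      ((volume.restrict (Ioc 0 R)).prod (volume.restrict (Ioi 0))) := by
    rw [integrable_prod_iff hcont.aestronglyMeasurable]
    constructor
    · filter_upwards [ae_restrict_mem measurableSet_Ioc] with t ht
      exact ((integrableOn_exp_neg_mul ht.1 0).const_mul _)
    · have hmeas : AEStronglyMeasurable (fun t : ℝ => |Real.sin t| / t)
          (volume.restrict (Ioc 0 R)) :=
        (Real.continuous_sin.abs.measurable.div measurable_id).aestronglyMeasurable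
      have h1 : IntegrableOn (fun t : ℝ => |Real.sin t| / t) (Ioc 0 R) := by
        refine Integrable.mono' (integrable_const 1) hmeas ?_
        filter_upwards [ae_restrict_mem measurableSet_Ioc] with t ht
        rw [Real.norm_eq_abs, abs_div, abs_abs, abs_of_pos ht.1]
        rw [div_le_one ht.1]
        calc |Real.sin t| ≤ |t| := Real.abs_sin_le_abs
        _ = t := abs_of_pos ht.1
      refine h1.congr ?_
      filter_upwards [ae_restrict_mem measurableSet_Ioc] with t ht
      rw [show (fun u : ℝ => ‖Real.sin t * Real.exp (-(t*u))‖) =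
          fun u : ℝ => |Real.sin t| * Real.exp (-(t*u)) from funext fun u => by
        rw [norm_mul, Real.norm_eq_abs, Real.norm_eq_abs, abs_of_pos (Real.exp_pos _)]]
      rw [MeasureTheory.integral_const_mul, integral_exp_neg_mul_Ioi ht.1]
      ring
  have hswap := integral_integral_swap (f := fun t u : ℝ => Real.sin t * Real.exp (-(t*u))) hInt
  have hleft : ∫ t in Ioc (0:ℝ) R, ∫ u in Ioi (0:ℝ), Real.sin t * Real.exp (-(t*u)) = Si R := by
    rw [Si, intervalIntegral.integral_of_le hR.le]
    apply setIntegral_congr_fun measurableSet_Ioc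
    intro t ht
    simp only []
    rw [MeasureTheory.integral_const_mul, integral_exp_neg_mul_Ioi ht.1]
    ring
  rw [← hleft, hswap]
  apply setIntegral_congr_fun measurableSet_Ioi
  intro u _
  simp only []
  rw [← intervalIntegral.integral_of_le hR.le]
  rw [show (fun x : ℝ => Real.sin x * Real.exp (-(x*u))) = fun x => Real.sin x * Real.exp (-(u*x))
    from funext fun x => by rw [mul_comm x u]]
  rw [integral_sin_mul_exp u R, mul_comm u R]

set_option maxHeartbeats 2000000 in
lemma tendsto_Si : Tendsto Si atTop (𝓝 (π/2)) := by
  have key : Tendsto (fun R : ℝ => ∫ u in Ioi (0:ℝ),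
      (1 - Real.exp (-(u*R)) * (Real.cos R + u * Real.sin R)) / (1 + u^2)) atTop
      (𝓝 (∫ u in Ioi (0:ℝ), (1 + u^2)⁻¹)) := by
    apply MeasureTheory.tendsto_integral_filter_of_dominated_convergence
      (bound := fun u : ℝ => (1+u^2)⁻¹ + 2 * Real.exp (-(1*u)))
    · filter_upwards with R
      apply Continuous.aestronglyMeasurable
      apply Continuous.div
      · exact continuous_const.sub (((continuous_id.mul continuous_const).neg.rexp).mul
          (continuous_const.add (continuous_id.mul continuous_const)))
      · exact continuous_const.add (continuous_pow 2)
      · intro u; positivity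
    · filter_upwards [eventually_ge_atTop (1:ℝ)] with R hR
      filter_upwards [ae_restrict_mem measurableSet_Ioi] with u hu
      have hu0 : (0:ℝ) < u := hu
      have h1 : |1 - Real.exp (-(u*R)) * (Real.cos R + u * Real.sin R)|
          ≤ 1 + Real.exp (-u) * (1 + u) := by
        have he : Real.exp (-(u*R)) ≤ Real.exp (-u) := by
          apply Real.exp_le_exp.2
          nlinarith
        have hc : |Real.cos R + u * Real.sin R| ≤ 1 + u := by
          calc |Real.cos R + u * Real.sin R| ≤ |Real.cos R| + |u * Real.sin R| := abs_add_le _ _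
          _ ≤ 1 + u := by
            have := Real.abs_cos_le_one R
            have := Real.abs_sin_le_one R
            rw [abs_mul, abs_of_pos hu0]
            nlinarith
        calc |1 - Real.exp (-(u*R)) * (Real.cos R + u * Real.sin R)|
            ≤ |(1:ℝ)| + |Real.exp (-(u*R)) * (Real.cos R + u * Real.sin R)| := abs_sub _ _
        _ ≤ 1 + Real.exp (-u) * (1 + u) := by
            rw [abs_one, abs_mul, abs_of_pos (Real.exp_pos _)]
            have := mul_le_mul he hc (abs_nonneg _) (Real.exp_pos (-u)).le
            linarith
      have h2 : (0:ℝ) < 1 + u^2 := by positivity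
      rw [Real.norm_eq_abs, abs_div, abs_of_pos h2, div_le_iff₀ h2]
      have h3 : Real.exp (-u) * (1+u) ≤ 2 * Real.exp (-(1*u)) * (1 + u^2) := by
        rw [one_mul]
        have h5 : (0:ℝ) ≤ 2*u^2 - u + 1 := by nlinarith [sq_nonneg (2*u-1)]
        nlinarith [mul_nonneg (Real.exp_pos (-u)).le h5]
      calc |1 - Real.exp (-(u*R)) * (Real.cos R + u * Real.sin R)|
          ≤ 1 + Real.exp (-u) * (1 + u) := h1
      _ ≤ (1+u^2)⁻¹ * (1+u^2) + 2 * Real.exp (-(1*u)) * (1+u^2) := by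
          rw [inv_mul_cancel₀ h2.ne']
          linarith
      _ = ((1+u^2)⁻¹ + 2 * Real.exp (-(1*u))) * (1+u^2) := by ring
    · exact integrable_inv_one_add_sq.integrableOn.add
        ((integrableOn_exp_neg_mul one_pos 0).const_mul 2)
    · filter_upwards [ae_restrict_mem measurableSet_Ioi] with u hu
      have hu0 : (0:ℝ) < u := hu
      have hexp : Tendsto (fun R : ℝ => Real.exp (-(u*R)) * (Real.cos R + u * Real.sin R))
          atTop (𝓝 0) := by
        refine squeeze_zero_norm (a := fun R : ℝ => Real.exp (-(u*R)) * (1+u)) ?_ ?_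
        · intro R
          rw [Real.norm_eq_abs, abs_mul, abs_of_pos (Real.exp_pos _)]
          apply mul_le_mul_of_nonneg_left _ (Real.exp_pos _).le
          calc |Real.cos R + u * Real.sin R| ≤ |Real.cos R| + |u * Real.sin R| := abs_add_le _ _
          _ ≤ 1 + u := by
            have := Real.abs_cos_le_one R
            have := Real.abs_sin_le_one R
            rw [abs_mul, abs_of_pos hu0]
            nlinarith
        · have h2 : Tendsto (fun R : ℝ => -(u*R)) atTop atBot := by
            simpa [neg_mul] using tendsto_neg_atBot_iff.mpr (tendsto_id.const_mul_atTop hu0)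
          have := (Real.tendsto_exp_atBot.comp h2).mul_const (1+u)
          simpa using this
      have h6 := ((tendsto_const_nhds (x := (1:ℝ))).sub hexp).div_const (1+u^2)
      rw [sub_zero] at h6
      rw [inv_eq_one_div]
      exact h6
  rw [show π/2 = ∫ u in Ioi (0:ℝ), (1+u^2)⁻¹ by rw [integral_Ioi_inv_one_add_sq]; simp]
  apply key.congr'
  filter_upwards [eventually_gt_atTop (0:ℝ)] with R hR
  exact (Si_eq_integral hR).symm

lemma abs_sinc_le_one (t : ℝ) : ‖Real.sin t / t‖ ≤ 1 := by
  rcases eq_or_ne t 0 with h | h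
  · simp [h]
  · rw [Real.norm_eq_abs, abs_div, div_le_one (abs_pos.2 h)]
    exact Real.abs_sin_le_abs

lemma intervalIntegrable_sinc (a b : ℝ) :
    IntervalIntegrable (fun t : ℝ => Real.sin t / t) volume a b := by
  rw [intervalIntegrable_iff]
  haveI : IsFiniteMeasure (volume.restrict (Set.uIoc a b)) := by
    rw [Set.uIoc]; infer_instance
  refine Integrable.mono' (integrable_const 1)
    ((Real.continuous_sin.measurable.div measurable_id).aestronglyMeasurable) ?_
  filter_upwards with t
  exact abs_sinc_le_one t

lemma hasDerivAt_Si {z : ℝ} (hz : z ≠ 0) : HasDerivAt Si (Real.sin z / z) z := by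
  apply intervalIntegral.integral_hasDerivAt_right (intervalIntegrable_sinc 0 z)
  · exact ⟨univ, univ_mem,
      ((Real.continuous_sin.measurable.div measurable_id).aestronglyMeasurable)⟩
  · exact Real.continuous_sin.continuousAt.div continuousAt_id hz

lemma tendsto_bounded_div_pow (g : ℝ → ℝ) (c : ℝ) (hg : ∀ t, |g t| ≤ c)
    (n : ℕ) (hn : 0 < n) (d : ℝ) (hd : 0 < d) :
    Tendsto (fun t : ℝ => g t / (d * t^n)) atTop (𝓝 0) := by
  have hden : Tendsto (fun t : ℝ => d * t^n) atTop atTop :=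
    (tendsto_pow_atTop hn.ne').const_mul_atTop hd
  have hlim : Tendsto (fun t : ℝ => c * (d * t^n)⁻¹) atTop (𝓝 0) := by
    simpa using hden.inv_tendsto_atTop.const_mul c
  refine squeeze_zero_norm' ?_ hlim
  filter_upwards [eventually_ge_atTop (1:ℝ)] with t ht
  have h1 : (0:ℝ) < d * t^n := by positivity
  rw [Real.norm_eq_abs, abs_div, abs_of_pos h1, ← div_eq_mul_inv]
  gcongr
  exact hg t

set_option maxHeartbeats 2000000 in
lemma integral_sin_div_pow5 {a : ℝ} (ha : 0 < a) (hsin : Real.sin a = 0)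
    (hcos : Real.cos a = 1) :
    ∫ t in Ioi (1:ℝ), Real.sin (a*t) / t^5
      = a/12 - a^3/24 + a^4/24 * (π/2 - Si a) := by
  set F : ℝ → ℝ := fun t => -(Real.sin (a*t) / (4*t^4)) - (a * Real.cos (a*t)) / (12*t^3)
    + (a^2 * Real.sin (a*t)) / (24*t^2) + (a^3 * Real.cos (a*t)) / (24*t)
    + a^4/24 * Si (a*t) with hF
  have hderiv : ∀ t ∈ Ici (1:ℝ), HasDerivAt F (Real.sin (a*t) / t^5) t := by
    intro t ht
    have ht0 : (0:ℝ) < t := lt_of_lt_of_le one_pos ht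
    have hat : (0:ℝ) < a*t := mul_pos ha ht0
    have hmul : HasDerivAt (fun t : ℝ => a*t) a t := by
      simpa using (hasDerivAt_id t).const_mul a
    have hs : HasDerivAt (fun t : ℝ => Real.sin (a*t)) (Real.cos (a*t) * a) t :=
      (Real.hasDerivAt_sin (a*t)).comp t hmul
    have hc : HasDerivAt (fun t : ℝ => Real.cos (a*t)) (-Real.sin (a*t) * a) t :=
      (Real.hasDerivAt_cos (a*t)).comp t hmul
    have hSi : HasDerivAt (fun t : ℝ => Si (a*t)) (Real.sin (a*t) / (a*t) * a) t :=
      (hasDerivAt_Si hat.ne').comp t hmul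
    have hp4 : HasDerivAt (fun t : ℝ => 4*t^4) (4*(4*t^3)) t :=
      (hasDerivAt_pow 4 t).const_mul 4
    have hp3 : HasDerivAt (fun t : ℝ => 12*t^3) (12*(3*t^2)) t :=
      (hasDerivAt_pow 3 t).const_mul 12
    have hp2 : HasDerivAt (fun t : ℝ => 24*t^2) (24*(2*t^1)) t :=
      (hasDerivAt_pow 2 t).const_mul 24
    have hp1 : HasDerivAt (fun t : ℝ => 24*t) 24 t := by
      simpa using (hasDerivAt_id t).const_mul 24
    have h1 := (hs.div hp4 (by positivity)).neg
    have h2 := (hs.const_mul (a^2)).div hp2 (by positivity)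
    have h3 := (hc.const_mul a).div hp3 (by positivity)
    have h4 := (hc.const_mul (a^3)).div hp1 (by positivity)
    have h5 := hSi.const_mul (a^4/24)
    have := (((h1.sub h3).add h2).add h4).add h5
    refine this.congr_deriv ?_
    field_simp
    ring
  have hint : IntegrableOn (fun t : ℝ => Real.sin (a*t) / t^5) (Ioi (1:ℝ)) := by
    have hb : IntegrableOn (fun t : ℝ => t ^ (-5 : ℝ)) (Ioi (1:ℝ)) :=
      integrableOn_Ioi_rpow_of_lt (by norm_num) one_pos
    refine Integrable.mono' hb ?_ ?_
    · exact ((Real.continuous_sin.comp (continuous_const.mul continuous_id)).measurable.div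
        (measurable_id.pow_const 5)).aestronglyMeasurable
    · filter_upwards [ae_restrict_mem measurableSet_Ioi] with t ht
      have ht0 : (0:ℝ) < t := lt_trans one_pos ht
      rw [Real.norm_eq_abs, abs_div, abs_of_pos (by positivity : (0:ℝ) < t^5),
        Real.rpow_neg ht0.le,
        show t ^ (5:ℝ) = t^(5:ℕ) by rw [show (5:ℝ) = ((5:ℕ):ℝ) by norm_num, Real.rpow_natCast]]
      calc |Real.sin (a*t)| / t^5 ≤ 1 / t^5 := by
            gcongr
            exact Real.abs_sin_le_one _
      _ = (t^(5:ℕ))⁻¹ := one_div _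
  have htend : Tendsto F atTop (𝓝 (a^4/24 * (π/2))) := by
    have h1 := (tendsto_bounded_div_pow (fun t => Real.sin (a*t)) 1
      (fun t => Real.abs_sin_le_one _) 4 (by norm_num) 4 (by norm_num)).neg
    have h3 := tendsto_bounded_div_pow (fun t => a * Real.cos (a*t)) a
      (fun t => by rw [abs_mul, abs_of_pos ha]
                   nlinarith [Real.abs_cos_le_one (a*t), ha.le, abs_nonneg (Real.cos (a*t))])
      3 (by norm_num) 12 (by norm_num)
    have h2 := tendsto_bounded_div_pow (fun t => a^2 * Real.sin (a*t)) (a^2)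
      (fun t => by rw [abs_mul, abs_of_pos (by positivity : (0:ℝ) < a^2)]
                   nlinarith [Real.abs_sin_le_one (a*t), abs_nonneg (Real.sin (a*t)),
                     sq_nonneg a])
      2 (by norm_num) 24 (by norm_num)
    have h4 := tendsto_bounded_div_pow (fun t => a^3 * Real.cos (a*t)) (a^3)
      (fun t => by rw [abs_mul, abs_of_pos (by positivity : (0:ℝ) < a^3)]
                   nlinarith [Real.abs_cos_le_one (a*t), abs_nonneg (Real.cos (a*t)),
                     pow_pos ha 3])
      1 (by norm_num) 24 (by norm_num)
    have h5 : Tendsto (fun t : ℝ => a^4/24 * Si (a*t)) atTop (𝓝 (a^4/24 * (π/2))) :=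
      (tendsto_Si.comp (tendsto_id.const_mul_atTop ha)).const_mul (a^4/24)
    have hpow1 : Tendsto (fun t : ℝ => (a^3 * Real.cos (a*t)) / (24*t^1)) atTop (𝓝 0) := h4
    have := ((((h1.sub h3).add h2).add hpow1).add h5)
    simp only [pow_one] at this
    simpa using this
  have hmain := integral_Ioi_of_hasDerivAt_of_tendsto' hderiv hint htend
  rw [hmain, hF]
  simp only [mul_one]
  rw [hsin, hcos]
  ring

lemma integrableOn_sin_div_pow5 (a : ℝ) :
    IntegrableOn (fun t : ℝ => Real.sin (a*t) / t^5) (Ioi (1:ℝ)) := by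
  have hb : IntegrableOn (fun t : ℝ => t ^ (-5 : ℝ)) (Ioi (1:ℝ)) :=
    integrableOn_Ioi_rpow_of_lt (by norm_num) one_pos
  refine Integrable.mono' hb ?_ ?_
  · exact ((Real.continuous_sin.comp (continuous_const.mul continuous_id)).measurable.div
      (measurable_id.pow_const 5)).aestronglyMeasurable
  · filter_upwards [ae_restrict_mem measurableSet_Ioi] with t ht
    have ht0 : (0:ℝ) < t := lt_trans one_pos ht
    rw [Real.norm_eq_abs, abs_div, abs_of_pos (by positivity : (0:ℝ) < t^5),
      Real.rpow_neg ht0.le,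
      show t ^ (5:ℝ) = t^(5:ℕ) by rw [show (5:ℝ) = ((5:ℕ):ℝ) by norm_num, Real.rpow_natCast]]
    calc |Real.sin (a*t)| / t^5 ≤ 1 / t^5 := by
          gcongr
          exact Real.abs_sin_le_one _
    _ = (t^(5:ℕ))⁻¹ := one_div _

set_option maxHeartbeats 2000000 in
theorem I₃_two_eq :
    I₃ 2 = (1 / (4 * π ^ 2))
      * ∑' k : ℕ, (((k : ℝ) + 1) * (1 - 2 * ((k : ℝ) + 1) ^ 2 * π ^ 2)
          + 2 * ((k : ℝ) + 1) ^ 4 * π ^ 3 * (π - 2 * Si (2 * ((k : ℝ) + 1) * π)))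
        / ((k : ℝ) + 1) ^ 3 := by
  have hπ : (0:ℝ) < π := Real.pi_pos
  set C : ℝ := 3 / (2 * π ^ 3) with hC
  set F : ℕ → ℝ → ℝ := fun k t => C * (Real.sin (2 * ((k:ℝ) + 1) * π * t) / ((k : ℝ) + 1) ^ 3 / t^5)
    with hFdef
  have hrw : I₃ 2 = ∫ t in Ioi (1:ℝ), ∑' k : ℕ, F k t := by
    rw [I₃]
    apply setIntegral_congr_fun measurableSet_Ioi
    intro t ht
    have ht0 : (0:ℝ) < t := lt_trans one_pos ht
    simp only [P₃, hFdef]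
    rw [show ((2:ℝ)+3) = ((5:ℕ):ℝ) by norm_num, Real.rpow_natCast]
    rw [mul_div_assoc, ← tsum_div_const, ← tsum_mul_left]
  have hFeq : ∀ k : ℕ, ∀ t : ℝ, F k t
      = (C / ((k:ℝ)+1)^3) * (Real.sin ((2 * ((k:ℝ) + 1) * π) * t) / t^5) := by
    intro k t
    simp only [hFdef]
    ring
  have hintk : ∀ k : ℕ, Integrable (F k) (volume.restrict (Ioi (1:ℝ))) := by
    intro k
    refine ((integrableOn_sin_div_pow5 (2 * ((k:ℝ) + 1) * π)).const_mul
      (C / ((k:ℝ)+1)^3)).congr ?_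
    filter_upwards with t
    rw [hFeq k t]
  set K : ℝ := ∫ t in Ioi (1:ℝ), t ^ (-5:ℝ) with hK
  have hKint : IntegrableOn (fun t : ℝ => t ^ (-5 : ℝ)) (Ioi (1:ℝ)) :=
    integrableOn_Ioi_rpow_of_lt (by norm_num) one_pos
  have hnorm : ∀ k : ℕ, ∫ t in Ioi (1:ℝ), ‖F k t‖ ≤ (C * K) * (1/((k:ℝ)+1)^3) := by
    intro k
    have hk1 : (0:ℝ) < (k:ℝ)+1 := by positivity
    have hC0 : (0:ℝ) < C := by rw [hC]; positivity
    have h1 : ∀ t ∈ Ioi (1:ℝ), ‖F k t‖ ≤ (C / ((k:ℝ)+1)^3) * t^(-5:ℝ) := by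
      intro t ht
      have ht0 : (0:ℝ) < t := lt_trans one_pos ht
      calc ‖F k t‖ = (C / ((k:ℝ)+1)^3) * ‖Real.sin ((2 * ((k:ℝ) + 1) * π) * t) / t^5‖ := by
            rw [hFeq k t, norm_mul, Real.norm_of_nonneg (by positivity : (0:ℝ) ≤ C / ((k:ℝ)+1)^3)]
      _ ≤ (C / ((k:ℝ)+1)^3) * t^(-5:ℝ) := by
            gcongr
            rw [Real.norm_eq_abs, abs_div, abs_of_pos (by positivity : (0:ℝ) < t^5),
              Real.rpow_neg ht0.le,
              show t ^ (5:ℝ) = t^(5:ℕ) by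
                rw [show (5:ℝ) = ((5:ℕ):ℝ) by norm_num, Real.rpow_natCast]]
            calc |Real.sin (2 * ((k:ℝ) + 1) * π * t)| / t^5 ≤ 1 / t^5 := by
                  gcongr
                  exact Real.abs_sin_le_one _
            _ = (t^(5:ℕ))⁻¹ := one_div _
    calc ∫ t in Ioi (1:ℝ), ‖F k t‖
        ≤ ∫ t in Ioi (1:ℝ), (C / ((k:ℝ)+1)^3) * t^(-5:ℝ) := by
          apply setIntegral_mono_on (hintk k).norm (hKint.const_mul _) measurableSet_Ioi h1
    _ = (C * K) * (1/((k:ℝ)+1)^3) := by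
        rw [MeasureTheory.integral_const_mul]; ring
  have hsum3 : Summable (fun k : ℕ => 1/((k:ℝ)+1)^3) := by
    have h := (summable_nat_add_iff 1).mpr
      (Real.summable_one_div_nat_pow.mpr (by norm_num : 1 < 3))
    refine h.congr fun n => ?_
    push_cast
    ring
  have hsum : Summable (fun k : ℕ => ∫ t in Ioi (1:ℝ), ‖F k t‖) := by
    refine Summable.of_nonneg_of_le (fun k => integral_nonneg fun t => norm_nonneg _)
      hnorm (hsum3.mul_left _)
  rw [hrw, ← integral_tsum_of_summable_integral_norm hintk hsum, ← tsum_mul_left]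
  apply tsum_congr
  intro k
  have hk1 : (0:ℝ) < (k:ℝ)+1 := by positivity
  have ha : (0:ℝ) < 2 * ((k:ℝ) + 1) * π := by positivity
  have hsin : Real.sin (2 * ((k:ℝ) + 1) * π) = 0 := by
    rw [show 2 * ((k:ℝ) + 1) * π = ((2*(k+1):ℕ):ℝ) * π by push_cast; ring,
      Real.sin_nat_mul_pi]
  have hcos : Real.cos (2 * ((k:ℝ) + 1) * π) = 1 := by
    rw [show 2 * ((k:ℝ) + 1) * π = (((k+1):ℕ):ℝ) * (2*π) by push_cast; ring,
      Real.cos_nat_mul_two_pi]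
  rw [show (∫ t in Ioi (1:ℝ), F k t) = ∫ t in Ioi (1:ℝ),
      (C / ((k:ℝ)+1)^3) * (Real.sin ((2 * ((k:ℝ) + 1) * π) * t) / t^5) from
    setIntegral_congr_fun measurableSet_Ioi fun t _ => hFeq k t]
  rw [MeasureTheory.integral_const_mul, integral_sin_div_pow5 ha hsin hcos]
  rw [hC]
  have hπ' : π ≠ 0 := hπ.ne'
  have hk1' : ((k:ℝ)+1) ≠ 0 := hk1.ne'
  field_simp
  ring
end

section
/- The limit lim_{n→∞} [Σ_{k=1}^n k² ln k - (n³/3 + n²/2 + n/6)·ln n + n³/9 - n/12] exists (defining ln B, the logarithm of the first Bendersky–Adamchik constant). -/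
open Real Filter

noncomputable def aSeq (n : ℕ) : ℝ :=
  (∑ k ∈ Finset.range n, ((k : ℝ) + 1) ^ 2 * Real.log ((k : ℝ) + 1))
    - ((n : ℝ) ^ 3 / 3 + (n : ℝ) ^ 2 / 2 + (n : ℝ) / 6) * Real.log n
    + (n : ℝ) ^ 3 / 9 - (n : ℝ) / 12

noncomputable def dSeq (n : ℕ) : ℝ := aSeq (n + 1) - aSeq n

lemma aSeq_zero : aSeq 0 = 0 := by
  simp [aSeq]

lemma dSeq_eq (n : ℕ) :
    dSeq n = ((n : ℝ) ^ 3 / 3 + (n : ℝ) ^ 2 / 2 + (n : ℝ) / 6) *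
      (Real.log n - Real.log ((n : ℝ) + 1)) + (n : ℝ) ^ 2 / 3 + (n : ℝ) / 3 + 1 / 36 := by
  unfold dSeq aSeq
  rw [Finset.sum_range_succ]
  push_cast
  ring

lemma log_taylor {y : ℝ} (h0 : 0 ≤ y) (h1 : y < 1) :
    |Real.log (1 + y) - (y - y ^ 2 / 2 + y ^ 3 / 3 - y ^ 4 / 4)| ≤ y ^ 5 / (1 - y) := by
  have h := Real.abs_log_sub_add_sum_range_le (x := -y) (by rw [abs_neg, abs_of_nonneg h0]; exact h1) 4
  rw [abs_neg, abs_of_nonneg h0] at h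
  have hs : (∑ i ∈ Finset.range 4, (-y) ^ (i + 1) / (i + 1)) =
      -y + y ^ 2 / 2 - y ^ 3 / 3 + y ^ 4 / 4 := by
    simp [Finset.sum_range_succ]; ring
  rw [hs] at h
  calc |Real.log (1 + y) - (y - y ^ 2 / 2 + y ^ 3 / 3 - y ^ 4 / 4)|
      = |(-y + y ^ 2 / 2 - y ^ 3 / 3 + y ^ 4 / 4) + Real.log (1 - -y)| := by
        rw [sub_neg_eq_add]; congr 1; ring
    _ ≤ y ^ 5 / (1 - y) := h

lemma key_real {x : ℝ} (hx : 2 ≤ x) :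
    |(x ^ 3 / 3 + x ^ 2 / 2 + x / 6) * (Real.log x - Real.log (x + 1))
      + x ^ 2 / 3 + x / 3 + 1 / 36| ≤ 3 / x ^ 2 := by
  have hx0 : 0 < x := by linarith
  have hy0 : (0:ℝ) ≤ 1 / x := by positivity
  have hy1 : 1 / x ≤ 1 / 2 := by
    apply one_div_le_one_div_of_le <;> linarith
  have hylt : 1 / x < 1 := by linarith
  have hT := log_taylor hy0 hylt
  have hlog : Real.log x - Real.log (x + 1) = -Real.log (1 + 1 / x) := by
    have h : x + 1 = x * (1 + 1 / x) := by field_simp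
    rw [h, Real.log_mul (ne_of_gt hx0) (by positivity)]
    ring
  have herr : (1 / x) ^ 5 / (1 - 1 / x) ≤ 2 / x ^ 5 := by
    rw [div_le_div_iff₀ (by linarith) (by positivity)]
    have h5 : (1 / x) ^ 5 * x ^ 5 = 1 := by field_simp
    nlinarith [pow_pos hx0 5, pow_pos hx0 4, pow_nonneg hy0 5]
  have hCle : x ^ 3 / 3 + x ^ 2 / 2 + x / 6 ≤ x ^ 3 := by
    nlinarith [mul_le_mul_of_nonneg_right hx (sq_nonneg x), sq_nonneg x, hx0.le]
  have hC0 : (0:ℝ) ≤ x ^ 3 / 3 + x ^ 2 / 2 + x / 6 := by positivity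
  have hCT : (x ^ 3 / 3 + x ^ 2 / 2 + x / 6) *
      ((1 / x) - (1 / x) ^ 2 / 2 + (1 / x) ^ 3 / 3 - (1 / x) ^ 4 / 4)
      = x ^ 2 / 3 + x / 3 + 1 / 36 - 5 / (72 * x ^ 2) - 1 / (24 * x ^ 3) := by
    field_simp
    ring
  have hEbound : |(x ^ 3 / 3 + x ^ 2 / 2 + x / 6) *
      (Real.log (1 + 1 / x) - ((1 / x) - (1 / x) ^ 2 / 2 + (1 / x) ^ 3 / 3 - (1 / x) ^ 4 / 4))|
      ≤ 2 / x ^ 2 := by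
    rw [abs_mul, abs_of_nonneg hC0]
    calc _ ≤ x ^ 3 * (2 / x ^ 5) :=
          mul_le_mul hCle (hT.trans herr) (abs_nonneg _) (by positivity)
      _ = 2 / x ^ 2 := by field_simp
  have htail : 5 / (72 * x ^ 2) + 1 / (24 * x ^ 3) ≤ 1 / x ^ 2 := by
    rw [div_add_div _ _ (by positivity) (by positivity), div_le_div_iff₀ (by positivity) (by positivity)]
    nlinarith [pow_pos hx0 2, pow_pos hx0 3, pow_pos hx0 5]
  have htail0 : (0:ℝ) ≤ 5 / (72 * x ^ 2) + 1 / (24 * x ^ 3) := by positivity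
  have heq : (x ^ 3 / 3 + x ^ 2 / 2 + x / 6) * (Real.log x - Real.log (x + 1))
      + x ^ 2 / 3 + x / 3 + 1 / 36
      = -((x ^ 3 / 3 + x ^ 2 / 2 + x / 6) *
        (Real.log (1 + 1 / x) - ((1 / x) - (1 / x) ^ 2 / 2 + (1 / x) ^ 3 / 3 - (1 / x) ^ 4 / 4)))
        + (5 / (72 * x ^ 2) + 1 / (24 * x ^ 3)) := by
    rw [hlog]
    linear_combination -hCT
  rw [heq, abs_le]
  have habs := abs_le.1 hEbound
  have e23 : (2:ℝ) / x ^ 2 + 1 / x ^ 2 = 3 / x ^ 2 := by ring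
  constructor <;> linarith [habs.1, habs.2]

lemma dSeq_bound (n : ℕ) : |dSeq n| ≤ 12 / ((n : ℝ) + 1) ^ 2 := by
  match n with
  | 0 =>
    have h0 : dSeq 0 = 1 / 36 := by
      simp [dSeq, aSeq, Finset.sum_range_one]
      norm_num
    rw [h0, abs_of_nonneg (by norm_num : (0:ℝ) ≤ 1 / 36)]
    norm_num
  | 1 =>
    have h2 : Real.log 2 < 1 := lt_trans Real.log_two_lt_d9 (by norm_num)
    have h2' : 0 < Real.log 2 := Real.log_pos (by norm_num)
    have h1 : dSeq 1 = -Real.log 2 + 25 / 36 := by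
      rw [dSeq_eq]
      push_cast
      norm_num
      ring
    rw [h1, abs_le]
    norm_num
    constructor <;> linarith
  | (m + 2) =>
    set n := m + 2 with hn
    have hx : (2:ℝ) ≤ (n : ℝ) := by
      have : (2:ℕ) ≤ n := by omega
      exact_mod_cast this
    have hx0 : (0:ℝ) < (n : ℝ) := by linarith
    have hb : |dSeq n| ≤ 3 / (n : ℝ) ^ 2 := by
      rw [dSeq_eq]
      exact key_real hx
    refine hb.trans ?_
    rw [div_le_div_iff₀ (by positivity) (by positivity)]
    nlinarith [sq_nonneg ((n:ℝ) - 1)]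

lemma dSeq_summable : Summable dSeq := by
  have h1 : Summable (fun n : ℕ => 1 / ((n : ℝ)) ^ 2) :=
    summable_one_div_nat_pow.2 one_lt_two
  have h2 : Summable (fun n : ℕ => 1 / ((n : ℝ) + 1) ^ 2) := by
    have := (summable_nat_add_iff 1).2 h1
    refine this.congr fun n => ?_
    push_cast
    ring
  have h3 : Summable (fun n : ℕ => 12 / ((n : ℝ) + 1) ^ 2) := by
    have := h2.mul_left 12
    refine this.congr fun n => ?_
    ring
  exact (Summable.of_nonneg_of_le (fun n => abs_nonneg _) dSeq_bound h3).of_abs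

theorem lnB_exists :
    ∃ L : ℝ, Tendsto
      (fun n : ℕ =>
        (∑ k ∈ Finset.range n, ((k : ℝ) + 1) ^ 2 * Real.log ((k : ℝ) + 1))
          - ((n : ℝ) ^ 3 / 3 + (n : ℝ) ^ 2 / 2 + (n : ℝ) / 6) * Real.log n
          + (n : ℝ) ^ 3 / 9 - (n : ℝ) / 12)
      atTop (nhds L) := by
  obtain ⟨L, hL⟩ := dSeq_summable
  refine ⟨L, ?_⟩
  have h := hL.tendsto_sum_nat
  refine h.congr fun n => ?_
  have : ∑ i ∈ Finset.range n, dSeq i = aSeq n - aSeq 0 :=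
    Finset.sum_range_sub aSeq n
  rw [this, aSeq_zero, sub_zero]
  rfl
end

section
/- The limit lim_{n→∞} [Σ_{k=1}^n k³ ln k - (n⁴/4 + n³/2 + n²/4 - 1/120)·ln n + n⁴/16 - n²/12] exists (defining ln C, the logarithm of the second Bendersky–Adamchik constant). -/
open Real Filter

noncomputable def fA (n : ℕ) : ℝ :=
  (∑ k ∈ Finset.range n, ((k : ℝ) + 1) ^ 3 * Real.log ((k : ℝ) + 1))
    - ((n : ℝ) ^ 4 / 4 + (n : ℝ) ^ 3 / 2 + (n : ℝ) ^ 2 / 4 - 1 / 120) * Real.log n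
    + (n : ℝ) ^ 4 / 16 - (n : ℝ) ^ 2 / 12

lemma dA_eq (n : ℕ) (hn : 1 ≤ n) :
    fA (n + 1) - fA n =
      -((n : ℝ) ^ 4 / 4 + (n : ℝ) ^ 3 / 2 + (n : ℝ) ^ 2 / 4 - 1 / 120)
          * Real.log (1 + 1 / (n : ℝ))
        + ((n : ℝ) ^ 3 / 4 + 3 * (n : ℝ) ^ 2 / 8 + (n : ℝ) / 12 - 1 / 48) := by
  have hx0 : (0 : ℝ) < (n : ℝ) := by exact_mod_cast hn
  have h1 : Real.log (1 + 1 / (n : ℝ)) = Real.log ((n : ℝ) + 1) - Real.log n := by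
    rw [show (1 : ℝ) + 1 / (n : ℝ) = ((n : ℝ) + 1) / n by field_simp,
      Real.log_div (by positivity) (by positivity)]
  simp only [fA, Finset.sum_range_succ]
  push_cast
  rw [h1]
  ring

set_option maxHeartbeats 1000000 in
lemma key_bound (x : ℝ) (hx : 2 ≤ x) :
    |(-(x ^ 4 / 4 + x ^ 3 / 2 + x ^ 2 / 4 - 1 / 120) * Real.log (1 + 1 / x)
        + (x ^ 3 / 4 + 3 * x ^ 2 / 8 + x / 12 - 1 / 48))| ≤ 3 * (1 / x ^ 2) := by
  have hx0 : (0 : ℝ) < x := by linarith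
  have hx1 : (1 : ℝ) < x := by linarith
  have hx1' : (0 : ℝ) < x - 1 := by linarith
  set P : ℝ := 1 / x - 1 / (2 * x ^ 2) + 1 / (3 * x ^ 3) - 1 / (4 * x ^ 4) + 1 / (5 * x ^ 5)
    with hP
  set Q : ℝ := x ^ 4 / 4 + x ^ 3 / 2 + x ^ 2 / 4 - 1 / 120 with hQ
  -- log estimate
  have habs : |(-x⁻¹ : ℝ)| < 1 := by
    rw [abs_neg, abs_inv, abs_of_pos hx0]
    rw [inv_lt_one_iff₀]; right; exact hx1
  have h := Real.abs_log_sub_add_sum_range_le habs 5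
  have hsum : (∑ i ∈ Finset.range 5, (-x⁻¹) ^ (i + 1) / (i + 1)) = -P := by
    simp [Finset.sum_range_succ, hP]
    field_simp
    ring
  have h1mx : (1 : ℝ) - (-x⁻¹) = 1 + 1 / x := by
    field_simp
    ring
  have hinv : x⁻¹ < 1 := by rw [inv_lt_one_iff₀]; right; exact hx1
  have habs6 : |(-x⁻¹ : ℝ)| ^ (5 + 1) / (1 - |(-x⁻¹ : ℝ)|) = 1 / (x ^ 5 * (x - 1)) := by
    rw [abs_neg, abs_inv, abs_of_pos hx0]
    rw [div_eq_div_iff (by exact ne_of_gt (by linarith)) (by positivity)]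
    field_simp
    ring_nf
    rw [← mul_pow, mul_inv_cancel₀ hx0.ne', one_pow]
  rw [hsum, h1mx, habs6] at h
  have hlog : |Real.log (1 + 1 / x) - P| ≤ 1 / (x ^ 5 * (x - 1)) := by
    have heq : Real.log (1 + 1 / x) - P = -P + Real.log (1 + 1 / x) := by ring
    rw [heq]; exact h
  -- rational part
  have hR : (x ^ 3 / 4 + 3 * x ^ 2 / 8 + x / 12 - 1 / 48) - Q * P
      = -((300 * x ^ 3 + 340 * x ^ 2 + 15 * x - 12) / (7200 * x ^ 5)) := by
    rw [hQ, hP]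
    field_simp
    ring
  have hd : (-(x ^ 4 / 4 + x ^ 3 / 2 + x ^ 2 / 4 - 1 / 120) * Real.log (1 + 1 / x)
        + (x ^ 3 / 4 + 3 * x ^ 2 / 8 + x / 12 - 1 / 48))
      = -Q * (Real.log (1 + 1 / x) - P)
        + ((x ^ 3 / 4 + 3 * x ^ 2 / 8 + x / 12 - 1 / 48) - Q * P) := by
    rw [hQ]; ring
  rw [hd, hR]
  have hQpos : (0 : ℝ) ≤ Q := by rw [hQ]; nlinarith
  have hQle : Q ≤ x ^ 4 := by
    rw [hQ]
    nlinarith [mul_nonneg (pow_nonneg hx0.le 3) (by linarith : (0:ℝ) ≤ x - 2),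
      mul_nonneg (pow_nonneg hx0.le 2) (by nlinarith : (0:ℝ) ≤ x ^ 2 - 1)]
  have hnum : (0 : ℝ) ≤ 300 * x ^ 3 + 340 * x ^ 2 + 15 * x - 12 := by nlinarith
  have hterm1 : x ^ 4 * (1 / (x ^ 5 * (x - 1))) ≤ 2 / x ^ 2 := by
    rw [mul_one_div, div_le_div_iff₀ (by positivity) (by positivity)]
    nlinarith [mul_nonneg (pow_nonneg hx0.le 5) (by linarith : (0:ℝ) ≤ x - 2)]
  have hterm2 : (300 * x ^ 3 + 340 * x ^ 2 + 15 * x - 12) / (7200 * x ^ 5) ≤ 1 / x ^ 2 := by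
    rw [div_le_div_iff₀ (by positivity) (by positivity)]
    nlinarith [mul_nonneg (pow_nonneg hx0.le 3) (by linarith : (0:ℝ) ≤ x - 2),
      mul_nonneg (pow_nonneg hx0.le 2) (by linarith : (0:ℝ) ≤ x - 2),
      pow_pos hx0 2, pow_pos hx0 3]
  calc |(-Q * (Real.log (1 + 1 / x) - P)
        + -((300 * x ^ 3 + 340 * x ^ 2 + 15 * x - 12) / (7200 * x ^ 5)))|
      ≤ |(-Q * (Real.log (1 + 1 / x) - P))|
        + |(-((300 * x ^ 3 + 340 * x ^ 2 + 15 * x - 12) / (7200 * x ^ 5)))| := abs_add_le _ _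
    _ = Q * |Real.log (1 + 1 / x) - P|
        + (300 * x ^ 3 + 340 * x ^ 2 + 15 * x - 12) / (7200 * x ^ 5) := by
        rw [abs_mul, abs_neg, abs_of_nonneg hQpos, abs_neg,
          abs_of_nonneg (div_nonneg hnum (by positivity))]
    _ ≤ x ^ 4 * (1 / (x ^ 5 * (x - 1)))
        + (300 * x ^ 3 + 340 * x ^ 2 + 15 * x - 12) / (7200 * x ^ 5) := by
        gcongr
    _ ≤ 2 / x ^ 2 + 1 / x ^ 2 := add_le_add hterm1 hterm2
    _ = 3 * (1 / x ^ 2) := by ring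

lemma dA_bound (n : ℕ) (hn : 2 ≤ n) :
    |fA (n + 1) - fA n| ≤ 3 * (1 / (n : ℝ) ^ 2) := by
  rw [dA_eq n (by omega)]
  exact key_bound (n : ℝ) (by exact_mod_cast hn)

theorem lnC_exists :
    ∃ L : ℝ, Tendsto
      (fun n : ℕ =>
        (∑ k ∈ Finset.range n, ((k : ℝ) + 1) ^ 3 * Real.log ((k : ℝ) + 1))
          - ((n : ℝ) ^ 4 / 4 + (n : ℝ) ^ 3 / 2 + (n : ℝ) ^ 2 / 4 - 1 / 120) * Real.log n
          + (n : ℝ) ^ 4 / 16 - (n : ℝ) ^ 2 / 12)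
      atTop (nhds L) := by
  have hsummable : Summable (fun n : ℕ => fA (n + 1) - fA n) := by
    apply summable_of_isBigO_nat (summable_one_div_nat_pow.mpr (by norm_num : 1 < 2))
    rw [Asymptotics.isBigO_iff]
    refine ⟨3, ?_⟩
    filter_upwards [eventually_ge_atTop 2] with n hn
    have := dA_bound n hn
    have hnn : (0 : ℝ) ≤ 1 / (n : ℝ) ^ 2 := by positivity
    rwa [Real.norm_eq_abs, Real.norm_eq_abs, abs_of_nonneg hnn]
  have htends := hsummable.hasSum.tendsto_sum_nat
  have heq : ∀ n : ℕ, (∑ i ∈ Finset.range n, (fA (i + 1) - fA i)) = fA n - fA 0 :=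
    fun n => Finset.sum_range_sub fA n
  refine ⟨(∑' n : ℕ, (fA (n + 1) - fA n)) + fA 0, ?_⟩
  have h2 : Tendsto (fun n : ℕ => fA n - fA 0 + fA 0) atTop
      (nhds ((∑' n : ℕ, (fA (n + 1) - fA n)) + fA 0)) := by
    apply Tendsto.add_const
    simpa only [heq] using htends
  simpa only [sub_add_cancel, fA] using h2
end
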